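/- For every array X and every integer e: (i) 𝓡_e(X^op) = (−1)^e · 𝓡_e(X); (ii) op(𝓡_e(X)) = (−1)^{d(X)} · 𝓡_{e+Def(X)}(X). Consequently, if |X^♯| is odd and Def(X) is even, then op(𝓡_e(X)) = −𝓡_e(X), so 𝓡_e(X) lies in the ℂ-span of the elements Y − Y^op over arrays Y. -/

import Mathlib

open Finset

namespace ArrayComb

/-- Cells of an array: an element of ℤ × ℤ/2ℤ (arrays are those supported on ℕ × ℤ/2ℤ). -/
abbrev Cell : Type := ℤ × ZMod 2

/-- An array is a finite subset of ℕ × ℤ/2ℤ. -/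
def IsArray (X : Finset Cell) : Prop := ∀ c ∈ X, 0 ≤ c.1

/-- The row `Xʲ = {x : (x,j) ∈ X}`. -/
def row (X : Finset Cell) (j : ZMod 2) : Finset ℤ :=
  (X.filter fun c => c.2 = j).image Prod.fst

def cup (X : Finset Cell) : Finset ℤ := row X 0 ∪ row X 1
def cap (X : Finset Cell) : Finset ℤ := row X 0 ∩ row X 1
def sdiff' (X : Finset Cell) : Finset ℤ := symmDiff (row X 0) (row X 1)

/-- The pairing `⟨A,B⟩ = |A ∩ B| mod 2`. -/
def pairing (A B : Finset ℤ) : ZMod 2 := ((A ∩ B).card : ZMod 2)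

/-- The defect `Def(X) = |X⁰| - |X¹|`. -/
def defect (X : Finset Cell) : ℤ := ((row X 0).card : ℤ) - ((row X 1).card : ℤ)

/-- The special array `X_sp`. -/
noncomputable def sp (X : Finset Cell) : Finset Cell :=
  ((cap X) ×ˢ (Finset.univ : Finset (ZMod 2))) ∪
    (sdiff' X).image (fun x => (x, (((sdiff' X).card : ZMod 2) + pairing (sdiff' X) (Finset.Icc 0 x))))

/-- `X^♯ = X¹ ⊖ (X_sp)¹`. -/
noncomputable def sharp (X : Finset Cell) : Finset ℤ := symmDiff (row X 1) (row (sp X) 1)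

/-- `s(X) = 2^{(|X^⊖| - Def(X_sp))/2}`. -/
noncomputable def sconst (X : Finset Cell) : ℕ := 2 ^ (((sdiff' X).card - (defect (sp X)).toNat) / 2)

/-- `d(X) = (Def(X) - Def(X_sp))/2`. -/
noncomputable def dd (X : Finset Cell) : ℤ := (defect X - defect (sp X)) / 2

/-- The map `D_{d,i}` on cells. -/
def Dcell (d : ℤ) (i : ZMod 2) (c : Cell) : Cell := (c.1 - d, i + c.2)

/-- The map `D_{d,i}` applied elementwise to a finite set of cells. -/
def Dset (d : ℤ) (i : ZMod 2) (H : Finset Cell) : Finset Cell := H.image (Dcell d i)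

/-- `X ∖_{d,i} H = X ⊖ H ⊖ D_{d,i}(H)`. -/
def remove (d : ℤ) (i : ZMod 2) (X H : Finset Cell) : Finset Cell :=
  symmDiff (symmDiff X H) (Dset d i H)

/-- The `(d,i)`-hooks of `X`. -/
def hooks (d : ℤ) (i : ZMod 2) (X : Finset Cell) : Finset Cell :=
  X.filter fun c => 0 ≤ c.1 - d ∧ Dcell d i c ∉ X

/-- The leg parity `l_{d,i}(λ, X)`. -/
noncomputable def leg (d : ℤ) (i : ZMod 2) (c : Cell) (X : Finset Cell) : ZMod 2 :=
  pairing (Finset.Icc 0 c.1) (row X c.2) +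
    pairing (Finset.Icc 0 (c.1 - d)) (row (remove d i X {c}) (i + c.2))

/-- `X^op`, interchanging the two rows. -/
def opA (X : Finset Cell) : Finset Cell := Dset 0 1 X

/-- The free ℂ-module `ℂ[𝒫]` on the set of arrays. -/
abbrev CP := Finset Cell →₀ ℂ

/-- The similarity class `Sim(X)`: all arrays `Y` with `Y^∪ = X^∪` and `Y^∩ = X^∩`,
realized as a finite set. -/
def SimSet (X : Finset Cell) : Finset (Finset Cell) :=
  ((cup X ×ˢ (Finset.univ : Finset (ZMod 2))).powerset).filter
    (fun Y => cup Y = cup X ∧ cap Y = cap X)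

/-- The Fourier transform `𝓡` on basis elements. -/
noncomputable def Rfun (X : Finset Cell) : CP :=
  (sconst X : ℂ)⁻¹ •
    ∑ Y ∈ SimSet X, ((-1 : ℂ) ^ (pairing (sharp X) (sharp Y)).val) • Finsupp.single Y (1 : ℂ)

/-- The hook-removal operator `𝓗ʲ_{d,i}` on basis elements. -/
noncomputable def Hfun (d : ℤ) (i j : ZMod 2) (X : Finset Cell) : CP :=
  ∑ c ∈ hooks d i X,
    ((-1 : ℂ) ^ (j * c.2 + leg d i c X).val) • Finsupp.single (remove d i X {c}) (1 : ℂ)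

/-- Extension of a map defined on basis elements to a ℂ-linear endomorphism of `ℂ[𝒫]`. -/
noncomputable def lift (f : Finset Cell → CP) : CP →ₗ[ℂ] CP :=
  Finsupp.linearCombination ℂ f

/-- The operator `op`, `op(X) = X^op`, on basis elements. -/
noncomputable def Ofun (X : Finset Cell) : CP := Finsupp.single (opA X) (1 : ℂ)

/-- The partial Fourier transform `𝓡_e`, summing only over `Y ∈ Sim(X)` with
`|Y^♯| ≡ e (mod 2)`. -/
noncomputable def Refun (e : ℤ) (X : Finset Cell) : CP :=
  (sconst X : ℂ)⁻¹ •
    ∑ Y ∈ (SimSet X).filter (fun Y => ((sharp Y).card : ℤ) % 2 = e % 2),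
      ((-1 : ℂ) ^ (pairing (sharp X) (sharp Y)).val) • Finsupp.single Y (1 : ℂ)

-- basic lemmas
lemma mem_row {X : Finset Cell} {x : ℤ} {j : ZMod 2} : x ∈ row X j ↔ (x, j) ∈ X := by
  constructor
  · simp only [row, mem_image, mem_filter]
    rintro ⟨c, ⟨hc, h2⟩, h1⟩
    rwa [← h1, ← h2]
  · intro h
    simp only [row, mem_image, mem_filter]
    exact ⟨(x, j), ⟨h, rfl⟩, rfl⟩

lemma zmod2_cases (v : ZMod 2) : v = 0 ∨ v = 1 := by revert v; decide

lemma mem_opA {X : Finset Cell} {c : Cell} : c ∈ opA X ↔ (c.1, 1 + c.2) ∈ X := by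
  simp only [opA, Dset, mem_image, Dcell]
  constructor
  · rintro ⟨a, ha, h⟩
    have h1 : a.1 = c.1 := by have := congrArg Prod.fst h; simpa using this
    have h2 : 1 + a.2 = c.2 := by have := congrArg Prod.snd h; simpa using this
    have : a.2 = 1 + c.2 := by rw [← h2]; rcases zmod2_cases a.2 with h | h <;> rw [h] <;> decide
    rwa [← h1, ← this]
  · intro h
    refine ⟨(c.1, 1 + c.2), h, ?_⟩
    have : (1 : ZMod 2) + (1 + c.2) = c.2 := by
      rcases zmod2_cases c.2 with h | h <;> rw [h] <;> decide
    simp [this]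

lemma row_opA (X : Finset Cell) (j : ZMod 2) : row (opA X) j = row X (1 + j) := by
  ext x; rw [mem_row, mem_opA, mem_row]

lemma opA_opA (X : Finset Cell) : opA (opA X) = X := by
  ext c
  rw [mem_opA, mem_opA]
  have : (1 : ZMod 2) + (1 + c.2) = c.2 := by
    rcases zmod2_cases c.2 with h | h <;> rw [h] <;> decide
  simp [this]

lemma zmod_10 : (1 + 0 : ZMod 2) = 1 := by decide
lemma zmod_11 : (1 + 1 : ZMod 2) = 0 := by decide

lemma cup_opA (X : Finset Cell) : cup (opA X) = cup X := by
  simp only [cup, row_opA, zmod_10, zmod_11]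
  exact union_comm _ _

lemma cap_opA (X : Finset Cell) : cap (opA X) = cap X := by
  simp only [cap, row_opA, zmod_10, zmod_11]
  exact inter_comm _ _

lemma sdiff'_opA (X : Finset Cell) : sdiff' (opA X) = sdiff' X := by
  simp only [sdiff', row_opA, zmod_10, zmod_11]
  exact symmDiff_comm _ _


/-- The label function used in `sp`. -/
noncomputable def labelf (X : Finset Cell) (x : ℤ) : ZMod 2 :=
  ((sdiff' X).card : ZMod 2) + pairing (sdiff' X) (Finset.Icc 0 x)

lemma mem_row_sp {X : Finset Cell} {x : ℤ} {j : ZMod 2} :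
    x ∈ row (sp X) j ↔ x ∈ cap X ∨ (x ∈ sdiff' X ∧ labelf X x = j) := by
  rw [mem_row]
  simp only [sp, mem_union, mem_product, mem_univ, and_true, mem_image, labelf]
  constructor
  · rintro (h | ⟨a, ha, h⟩)
    · exact Or.inl h
    · have h1 : a = x := congrArg Prod.fst h
      have h2 := congrArg Prod.snd h
      subst h1
      exact Or.inr ⟨ha, h2⟩
  · rintro (h | ⟨h, hl⟩)
    · exact Or.inl h
    · exact Or.inr ⟨x, h, by rw [← hl]⟩

lemma symmDiff_eq_union_sdiff_inter (s t : Finset ℤ) :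
    symmDiff s t = (s ∪ t) \ (s ∩ t) := by
  ext x
  simp only [Finset.mem_symmDiff, mem_sdiff, mem_union, mem_inter]
  tauto

lemma sdiff'_eq (X : Finset Cell) : sdiff' X = cup X \ cap X := by
  rw [sdiff', cup, cap]
  exact symmDiff_eq_union_sdiff_inter _ _

lemma cup_eq (X : Finset Cell) : cup X = cap X ∪ sdiff' X := by
  ext x
  simp only [cup, cap, sdiff', mem_union, mem_inter, Finset.mem_symmDiff]
  tauto

lemma cap_sp (X : Finset Cell) : cap (sp X) = cap X := by
  ext x
  simp only [cap, mem_inter, mem_row_sp]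
  constructor
  · rintro ⟨h0 | ⟨_, l0⟩, h1 | ⟨_, l1⟩⟩ <;> try assumption
    exact absurd (l0.symm.trans l1) (by decide)
  · exact fun h => ⟨Or.inl h, Or.inl h⟩

lemma cup_sp (X : Finset Cell) : cup (sp X) = cup X := by
  rw [cup_eq X]
  ext x
  simp only [cup, mem_union, mem_row_sp]
  constructor
  · rintro ((h | ⟨h, _⟩) | (h | ⟨h, _⟩)) <;> [exact Or.inl h; exact Or.inr h;
      exact Or.inl h; exact Or.inr h]
  · rintro (h | h)
    · exact Or.inl (Or.inl h)
    · rcases zmod2_cases (labelf X x) with hl | hl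
      · exact Or.inl (Or.inr ⟨h, hl⟩)
      · exact Or.inr (Or.inr ⟨h, hl⟩)

lemma sp_congr {X Y : Finset Cell} (hcap : cap Y = cap X) (hsd : sdiff' Y = sdiff' X) :
    sp Y = sp X := by
  rw [sp, sp, hcap, hsd]

lemma sdiff'_congr {X Y : Finset Cell} (hcup : cup Y = cup X) (hcap : cap Y = cap X) :
    sdiff' Y = sdiff' X := by
  rw [sdiff'_eq, sdiff'_eq, hcup, hcap]

lemma card_rows (X : Finset Cell) :
    (row X 0).card + (row X 1).card = (cup X).card + (cap X).card := by
  rw [cup, cap, card_union_add_card_inter]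

lemma card_sdiff'_add (X : Finset Cell) :
    (sdiff' X).card + (cap X).card = (cup X).card := by
  rw [sdiff'_eq]
  exact card_sdiff_add_card_eq_card (by rw [cup, cap]; exact inter_subset_union)

lemma card_symmDiff_two (s t : Finset ℤ) :
    (symmDiff s t).card + 2 * (s ∩ t).card = s.card + t.card := by
  have h1 := symmDiff_eq_union_sdiff_inter s t
  have h2 := card_union_add_card_inter s t
  have h3 : (s ∩ t).card ≤ (s ∪ t).card := card_le_card inter_subset_union
  rw [h1, card_sdiff_of_subset inter_subset_union]
  omega


lemma card_symmDiff_zmod (s t : Finset ℤ) :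
    ((symmDiff s t).card : ZMod 2) = (s.card : ZMod 2) + t.card := by
  have h := card_symmDiff_two s t
  have : ((symmDiff s t).card + 2 * (s ∩ t).card : ℕ) = ((s.card + t.card : ℕ)) := h
  calc ((symmDiff s t).card : ZMod 2)
      = (((symmDiff s t).card + 2 * (s ∩ t).card : ℕ) : ZMod 2) := by
        push_cast
        rw [(by decide : (2 : ZMod 2) = 0)]
        ring
    _ = ((s.card + t.card : ℕ) : ZMod 2) := by rw [this]
    _ = (s.card : ZMod 2) + t.card := by push_cast; ring

lemma pairing_symmDiff_left (A C B : Finset ℤ) :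
    pairing (symmDiff A C) B = pairing A B + pairing C B := by
  have h : symmDiff A C ∩ B = symmDiff (A ∩ B) (C ∩ B) := by
    ext x
    simp only [Finset.mem_symmDiff, mem_inter]
    tauto
  rw [pairing, h, card_symmDiff_zmod]
  rfl

lemma pairing_of_subset {A B : Finset ℤ} (h : B ⊆ A) : pairing A B = (B.card : ZMod 2) := by
  rw [pairing, inter_eq_right.mpr h]

lemma pairing_of_subset_left {A B : Finset ℤ} (h : A ⊆ B) : pairing A B = (A.card : ZMod 2) := by
  rw [pairing, inter_eq_left.mpr h]

-- sign lemmas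
lemma neg_one_pow_val_add (v w : ZMod 2) :
    ((-1 : ℂ) ^ (v + w).val) = (-1 : ℂ) ^ v.val * (-1 : ℂ) ^ w.val := by
  rcases zmod2_cases v with hv | hv <;> rcases zmod2_cases w with hw | hw <;>
    subst hv <;> subst hw <;>
    simp only [show ((0:ZMod 2)+0).val = 0 from rfl, show ((0:ZMod 2)+1).val = 1 from rfl,
      show ((1:ZMod 2)+0).val = 1 from rfl, show ((1:ZMod 2)+1).val = 0 from rfl,
      show ((0:ZMod 2)).val = 0 from rfl, show ((1:ZMod 2)).val = 1 from rfl] <;> norm_num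

lemma neg_one_pow_natCast_val (n : ℕ) :
    ((-1 : ℂ) ^ ((n : ZMod 2)).val) = (-1 : ℂ) ^ n := by
  have h : (n : ZMod 2).val = n % 2 := ZMod.val_natCast 2 n
  rw [h]
  conv_rhs => rw [← Nat.div_add_mod n 2]
  rw [pow_add, pow_mul]
  norm_num

lemma neg_one_zpow_eq_pow_of_parity {m : ℤ} {n : ℕ} (h : (n : ℤ) % 2 = m % 2) :
    ((-1 : ℂ) ^ m) = (-1 : ℂ) ^ n := by
  rcases Int.even_or_odd m with hm | hm
  · rw [hm.neg_one_zpow]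
    have : Even n := by
      rw [Int.even_iff] at hm
      rw [Nat.even_iff]
      omega
    rw [this.neg_one_pow]
  · rw [hm.neg_one_zpow]
    have : Odd n := by
      rw [Int.odd_iff] at hm
      rw [Nat.odd_iff]
      omega
    rw [this.neg_one_pow]


lemma sp_opA (Y : Finset Cell) : sp (opA Y) = sp Y := sp_congr (cap_opA Y) (sdiff'_opA Y)

lemma sharp_opA (Y : Finset Cell) : sharp (opA Y) = symmDiff (sharp Y) (sdiff' Y) := by
  rw [sharp, sp_opA, row_opA, zmod_11, sharp, sdiff']
  ext x
  simp only [Finset.mem_symmDiff]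
  tauto

lemma sconst_opA (X : Finset Cell) : sconst (opA X) = sconst X := by
  rw [sconst, sconst, sdiff'_opA, sp_opA]

lemma SimSet_opA (X : Finset Cell) : SimSet (opA X) = SimSet X := by
  rw [SimSet, SimSet, cup_opA, cap_opA]

lemma mem_SimSet {X Y : Finset Cell} :
    Y ∈ SimSet X ↔ Y ⊆ cup X ×ˢ (Finset.univ : Finset (ZMod 2)) ∧ cup Y = cup X ∧ cap Y = cap X := by
  simp only [SimSet, mem_filter, mem_powerset, and_assoc]

lemma opA_mem_SimSet {X Y : Finset Cell} (h : Y ∈ SimSet X) : opA Y ∈ SimSet X := by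
  rw [mem_SimSet] at h ⊢
  refine ⟨?_, by rw [cup_opA]; exact h.2.1, by rw [cap_opA]; exact h.2.2⟩
  intro c hc
  rw [mem_opA] at hc
  have := h.1 hc
  rw [mem_product] at this ⊢
  exact ⟨this.1, mem_univ _⟩

lemma symmDiff_subset_of_between {A B cp cu : Finset ℤ} (hA1 : cp ⊆ A) (hA2 : A ⊆ cu)
    (hB1 : cp ⊆ B) (hB2 : B ⊆ cu) : symmDiff A B ⊆ cu \ cp := by
  intro x hx
  rw [Finset.mem_symmDiff] at hx
  rw [mem_sdiff]
  rcases hx with ⟨h1, h2⟩ | ⟨h1, h2⟩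
  · exact ⟨hA2 h1, fun h => h2 (hB1 h)⟩
  · exact ⟨hB2 h1, fun h => h2 (hA1 h)⟩

lemma sharp_subset (X : Finset Cell) : sharp X ⊆ sdiff' X := by
  rw [sharp, sdiff'_eq]
  refine symmDiff_subset_of_between ?_ ?_ ?_ ?_
  · exact (inter_subset_right : cap X ⊆ _)
  · exact subset_union_right
  · rw [← cap_sp X]; exact inter_subset_right
  · rw [← cup_sp X]; exact subset_union_right

lemma sdiff'_of_mem_SimSet {X Y : Finset Cell} (h : Y ∈ SimSet X) : sdiff' Y = sdiff' X := by
  rw [mem_SimSet] at h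
  exact sdiff'_congr h.2.1 h.2.2

lemma sp_of_mem_SimSet {X Y : Finset Cell} (h : Y ∈ SimSet X) : sp Y = sp X := by
  rw [mem_SimSet] at h
  exact sp_congr h.2.2 (sdiff'_congr h.2.1 h.2.2)

lemma sharp_subset_of_mem_SimSet {X Y : Finset Cell} (h : Y ∈ SimSet X) :
    sharp Y ⊆ sdiff' X := by
  rw [← sdiff'_of_mem_SimSet h]
  exact sharp_subset Y

lemma isArray_of_mem_SimSet {X Y : Finset Cell} (hX : IsArray X) (h : Y ∈ SimSet X) :
    IsArray Y := by
  rw [mem_SimSet] at h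
  intro c hc
  have := h.1 hc
  rw [mem_product] at this
  have h1 : c.1 ∈ cup X := this.1
  rw [cup, mem_union, mem_row, mem_row] at h1
  rcases h1 with h1 | h1
  · exact hX (c.1, 0) h1
  · exact hX (c.1, 1) h1

lemma defect_sub_card_sdiff'_even (X : Finset Cell) :
    Even (defect X - ((sdiff' X).card : ℤ)) := by
  have h1 := card_rows X
  have h2 := card_sdiff'_add X
  rw [defect, Int.even_iff]
  omega

lemma defect_sub_defect_sp (X : Finset Cell) :
    defect X - defect (sp X) = 2 * (((row (sp X) 1).card : ℤ) - ((row X 1).card : ℤ)) := by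
  have h1 := card_rows X
  have h2 := card_rows (sp X)
  rw [cup_sp, cap_sp] at h2
  rw [defect, defect]
  omega

lemma dd_eq (X : Finset Cell) :
    dd X = ((row (sp X) 1).card : ℤ) - ((row X 1).card : ℤ) := by
  rw [dd, defect_sub_defect_sp]
  omega

lemma dd_parity (X : Finset Cell) : dd X % 2 = ((sharp X).card : ℤ) % 2 := by
  have hc := card_symmDiff_two (row X 1) (row (sp X) 1)
  rw [dd_eq]
  have : (sharp X).card = (symmDiff (row X 1) (row (sp X) 1)).card := by rw [sharp]
  omega


lemma pairing_comm (A B : Finset ℤ) : pairing A B = pairing B A := by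
  rw [pairing, pairing, inter_comm]

lemma card_sharp_opA {X Y : Finset Cell} (h : Y ∈ SimSet X) :
    (sharp (opA Y)).card + (sharp Y).card = (sdiff' X).card := by
  rw [sharp_opA, sdiff'_of_mem_SimSet h]
  have hsub := sharp_subset_of_mem_SimSet h
  have he : symmDiff (sharp Y) (sdiff' X) = sdiff' X \ sharp Y := by
    ext x
    simp only [Finset.mem_symmDiff, mem_sdiff]
    constructor
    · rintro (⟨h1, h2⟩ | ⟨h1, h2⟩)
      · exact absurd (hsub h1) h2
      · exact ⟨h1, h2⟩
    · rintro ⟨h1, h2⟩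
      exact Or.inr ⟨h1, h2⟩
  rw [he, card_sdiff_of_subset hsub]
  have := card_le_card hsub
  omega

lemma opA_mem_filter {X Y : Finset Cell} {e e' : ℤ}
    (he : (e + e') % 2 = ((sdiff' X).card : ℤ) % 2)
    (hY : Y ∈ (SimSet X).filter (fun Z => ((sharp Z).card : ℤ) % 2 = e % 2)) :
    opA Y ∈ (SimSet X).filter (fun Z => ((sharp Z).card : ℤ) % 2 = e' % 2) := by
  rw [mem_filter] at hY ⊢
  refine ⟨opA_mem_SimSet hY.1, ?_⟩
  have hc := card_sharp_opA hY.1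
  have h2 := hY.2
  omega


lemma part1 (e : ℤ) (X : Finset Cell) : Refun e (opA X) = ((-1 : ℂ) ^ e) • Refun e X := by
  rw [Refun, Refun, SimSet_opA, sconst_opA]
  rw [smul_comm ((-1 : ℂ) ^ e) (((sconst X : ℂ))⁻¹)
    (∑ Y ∈ (SimSet X).filter (fun Y => ((sharp Y).card : ℤ) % 2 = e % 2),
      ((-1 : ℂ) ^ (pairing (sharp X) (sharp Y)).val) • Finsupp.single Y (1 : ℂ))]
  congr 1
  rw [Finset.smul_sum]
  refine Finset.sum_congr rfl fun Y hY => ?_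
  rw [mem_filter] at hY
  rw [smul_smul]
  congr 1
  rw [sharp_opA, pairing_symmDiff_left, neg_one_pow_val_add,
    pairing_of_subset (sharp_subset_of_mem_SimSet hY.1), neg_one_pow_natCast_val,
    neg_one_zpow_eq_pow_of_parity hY.2]
  ring


lemma lift_Ofun_single (Y : Finset Cell) (a : ℂ) :
    (lift Ofun) (a • Finsupp.single Y (1 : ℂ)) = a • Finsupp.single (opA Y) (1 : ℂ) := by
  rw [map_smul, lift, Finsupp.linearCombination_single, one_smul, Ofun]

lemma neg_one_pow_sq (n : ℕ) : ((-1 : ℂ) ^ n) * ((-1 : ℂ) ^ n) = 1 := by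
  rw [← pow_add]
  exact Even.neg_one_pow ⟨n, rfl⟩

lemma part2 (e : ℤ) (X : Finset Cell) :
    lift Ofun (Refun e X) = ((-1 : ℂ) ^ (dd X)) • Refun (e + defect X) X := by
  have hpar : (e + (e + defect X)) % 2 = ((sdiff' X).card : ℤ) % 2 := by
    have := defect_sub_card_sdiff'_even X
    rw [Int.even_iff] at this
    omega
  have hpar' : ((e + defect X) + e) % 2 = ((sdiff' X).card : ℤ) % 2 := by
    rwa [add_comm]
  rw [Refun, Refun, map_smul, map_sum]
  rw [smul_comm ((-1 : ℂ) ^ (dd X)) (((sconst X : ℂ))⁻¹)]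
  congr 1
  rw [Finset.smul_sum]
  rw [Finset.sum_congr rfl fun Y _ => lift_Ofun_single Y _]
  refine Finset.sum_bij' (fun Y _ => opA Y) (fun Y _ => opA Y)
    (fun Y hY => opA_mem_filter hpar hY) (fun Y hY => opA_mem_filter hpar' hY)
    (fun Y _ => opA_opA Y) (fun Y _ => opA_opA Y) ?_
  intro Y hY
  rw [mem_filter] at hY
  rw [smul_smul]
  congr 1
  rw [pairing_comm (sharp X) (sharp (opA Y)), sharp_opA, pairing_symmDiff_left,
    neg_one_pow_val_add, pairing_comm (sharp Y) (sharp X),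
    sdiff'_of_mem_SimSet hY.1,
    pairing_of_subset (sharp_subset X), neg_one_pow_natCast_val,
    neg_one_zpow_eq_pow_of_parity (dd_parity X).symm]
  have hs := neg_one_pow_sq (sharp X).card
  linear_combination (-((-1:ℂ) ^ (pairing (sharp X) (sharp Y)).val)) * hs


lemma part3a (e : ℤ) (X : Finset Cell) (hodd : Odd (sharp X).card)
    (heven : Even (defect X)) : lift Ofun (Refun e X) = - Refun e X := by
  have hmod : (e + defect X) % 2 = e % 2 := by
    rw [Int.even_iff] at heven
    omega
  have hdd : Odd (dd X) := by
    have hp := dd_parity X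
    rw [Nat.odd_iff] at hodd
    rw [Int.odd_iff]
    omega
  rw [part2 e X, hdd.neg_one_zpow, Refun, Refun, hmod, neg_smul, one_smul]


/-- Behaviour of the partial Fourier transforms `𝓡_e` under `op`:
(i) `𝓡_e(X^op) = (-1)^e 𝓡_e(X)`; (ii) `op(𝓡_e(X)) = (-1)^{d(X)} 𝓡_{e+Def(X)}(X)`;
consequently, if `|X^♯|` is odd and `Def(X)` is even, then `op(𝓡_e(X)) = -𝓡_e(X)` and
`𝓡_e(X)` lies in the span of the elements `Y - Y^op`. -/
theorem Refun_op (e : ℤ) (X : Finset Cell) (hX : IsArray X) :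
    Refun e (opA X) = ((-1 : ℂ) ^ e) • Refun e X ∧
    lift Ofun (Refun e X) = ((-1 : ℂ) ^ (dd X)) • Refun (e + defect X) X ∧
    (Odd (sharp X).card → Even (defect X) →
      lift Ofun (Refun e X) = - Refun e X ∧
      Refun e X ∈ Submodule.span ℂ
        {v : CP | ∃ Y : Finset Cell, IsArray Y ∧
          v = Finsupp.single Y (1 : ℂ) - Finsupp.single (opA Y) (1 : ℂ)}) := by
  refine ⟨part1 e X, part2 e X, fun hodd heven => ⟨part3a e X hodd heven, ?_⟩⟩
  have h3a := part3a e X hodd heven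
  have key : Refun e X = (2⁻¹ : ℂ) • (Refun e X - lift Ofun (Refun e X)) := by
    rw [h3a, sub_neg_eq_add, ← two_smul ℂ, smul_smul]
    norm_num
  have expand : Refun e X - lift Ofun (Refun e X) =
      (sconst X : ℂ)⁻¹ • ∑ Y ∈ (SimSet X).filter (fun Y => ((sharp Y).card : ℤ) % 2 = e % 2),
        ((-1 : ℂ) ^ (pairing (sharp X) (sharp Y)).val) •
          (Finsupp.single Y (1 : ℂ) - Finsupp.single (opA Y) (1 : ℂ)) := by
    rw [Refun, map_smul, map_sum, ← smul_sub, ← Finset.sum_sub_distrib]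
    congr 1
    refine Finset.sum_congr rfl fun Y _ => ?_
    rw [lift_Ofun_single, ← smul_sub]
  rw [key, expand]
  refine Submodule.smul_mem _ _ (Submodule.smul_mem _ _ (Submodule.sum_mem _ fun Y hY => ?_))
  refine Submodule.smul_mem _ _ (Submodule.subset_span ?_)
  rw [mem_filter] at hY
  exact ⟨Y, isArray_of_mem_SimSet hX hY.1, rfl⟩


end ArrayComb
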